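/- Let 1 < p ≤ ∞, let a, b be points of a tree Γ (or interval), and let T_{a,K} f(x) = v(x) χ_K(x) ∫_a^x u f χ_K dt, T_{b,K} correspondingly. Let S be the quotient map of L^p(K) by the span of v, and define A(K) = ‖S T_{a,K}‖. Then A(K) is independent of the base point a: ‖S T_{a,K}‖ = ‖S T_{b,K}‖ for all a, b. -/

import Mathlib

open MeasureTheory ENNReal

lemma mem_uIoc_xor (c d t : ℝ) : t ∈ Set.uIoc c d ↔ Xor' (c < t) (d < t) := by
  rcases le_total c d with h | h
  · rw [Set.uIoc_of_le h, Set.mem_Ioc]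
    constructor
    · rintro ⟨h1, h2⟩; exact Or.inl ⟨h1, not_lt.2 h2⟩
    · rintro (⟨h1, h2⟩ | ⟨h1, h2⟩)
      · exact ⟨h1, not_lt.1 h2⟩
      · exact absurd (h.trans_lt h1) h2
  · rw [Set.uIoc_of_ge h, Set.mem_Ioc]
    constructor
    · rintro ⟨h1, h2⟩; exact Or.inr ⟨h1, not_lt.2 h2⟩
    · rintro (⟨h1, h2⟩ | ⟨h1, h2⟩)
      · exact absurd (h.trans_lt h1) h2
      · exact ⟨h1, not_lt.1 h2⟩

lemma indicator_key (a b x : ℝ) (g : ℝ → ℝ) (t : ℝ) :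
    (Set.uIoc b x).indicator g t =
      (Set.uIoc a x).indicator (fun s => g s - 2 * (Set.uIoc a b).indicator g s) t
        + (Set.uIoc a b).indicator g t := by
  have hbx : t ∈ Set.uIoc b x ↔ ((t ∈ Set.uIoc a x) ↔ ¬ (t ∈ Set.uIoc a b)) := by
    rw [mem_uIoc_xor, mem_uIoc_xor, mem_uIoc_xor]
    unfold Xor' Xor
    tauto
  by_cases h1 : t ∈ Set.uIoc a x <;> by_cases h2 : t ∈ Set.uIoc a b
  · have h3 : t ∉ Set.uIoc b x := fun h => ((hbx.1 h).1 h1) h2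
    simp [Set.indicator_of_notMem h3, Set.indicator_of_mem h1, Set.indicator_of_mem h2]
    ring
  · have h3 : t ∈ Set.uIoc b x := hbx.2 (by tauto)
    simp [Set.indicator_of_mem h3, Set.indicator_of_mem h1, Set.indicator_of_notMem h2]
  · have h3 : t ∈ Set.uIoc b x := hbx.2 (by tauto)
    simp [Set.indicator_of_mem h3, Set.indicator_of_notMem h1, Set.indicator_of_mem h2]
  · have h3 : t ∉ Set.uIoc b x := fun h => h1 ((hbx.1 h).2 h2)
    simp [Set.indicator_of_notMem h3, Set.indicator_of_notMem h1, Set.indicator_of_notMem h2]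

/-- The quotient-norm functional `A(K) = ‖S ∘ T_{a,K}‖` of the Hardy operator with base
point `a` on the set `S ⊆ ℝ`, where the integral `∫_a^x` is the (unsigned) integral over the
path from `a` to `x` (the unordered interval `uIoc a x`), intersected with `K`:
`A = sup_{f ∈ L^p(K), ‖f‖_p ≤ 1} inf_{α ∈ ℝ} ‖v·(∫_{uIoc a ·} u f − α)‖_{p,K}`. -/
noncomputable def hardyABase (p : ℝ≥0∞) (a : ℝ) (K : Set ℝ) (u v : ℝ → ℝ) : ℝ≥0∞ :=
  ⨆ (f : ℝ → ℝ) (_ : MemLp f p (volume.restrict K) ∧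
      eLpNorm f p (volume.restrict K) ≤ 1),
    ⨅ α : ℝ, eLpNorm (fun x => v x * ((∫ t in Set.uIoc a x ∩ K, u t * f t) - α)) p
      (volume.restrict K)

lemma hardy_mono (p q : ℝ≥0∞) (hpq : 1 / p + 1 / q = 1)
    (K : Set ℝ) (u v : ℝ → ℝ)
    (hu : MemLp u q (volume.restrict K)) (a b : ℝ) :
    hardyABase p b K u v ≤ hardyABase p a K u v := by
  unfold hardyABase
  refine iSup₂_le fun f hf => ?_
  have hBmeas : MeasurableSet (Set.uIoc a b) := measurableSet_uIoc
  set F : ℝ → ℝ := fun t => f t - 2 * (Set.uIoc a b).indicator f t with hFdef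
  have huF : ∀ s, u s * F s =
      u s * f s - 2 * (Set.uIoc a b).indicator (fun t => u t * f t) s := by
    intro s
    by_cases hs : s ∈ Set.uIoc a b <;>
      simp [hFdef, Set.indicator_of_mem, Set.indicator_of_notMem, hs] <;> ring
  have hnormF : ∀ t, ‖F t‖ = ‖f t‖ := by
    intro t
    by_cases ht : t ∈ Set.uIoc a b <;>
      simp [hFdef, Set.indicator_of_mem, Set.indicator_of_notMem, ht]
    rw [show f t - 2 * f t = -(f t) by ring, abs_neg]
  have hFnorm : eLpNorm F p (volume.restrict K) = eLpNorm f p (volume.restrict K) :=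
    eLpNorm_congr_norm_ae (Filter.Eventually.of_forall hnormF)
  have hFmem : MemLp F p (volume.restrict K) := by
    have h2 : MemLp (fun t => 2 * (Set.uIoc a b).indicator f t) p (volume.restrict K) := by
      simpa [Pi.smul_def, smul_eq_mul] using ((hf.1.indicator hBmeas).const_smul (2:ℝ))
    exact hf.1.sub h2
  have hg : Integrable (fun t => u t * f t) (volume.restrict K) := by
    have h1 : (1:ℝ≥0∞) / 1 = 1 / q + 1 / p := by
      rw [div_one, add_comm]; exact hpq.symm
    have := MemLp.smul (μ := volume.restrict K) (r := 1)
      (hpqr := ⟨by simpa [one_div] using h1.symm⟩) hf.1 hu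
    exact memLp_one_iff_integrable.mp this
  set c : ℝ := ∫ t in Set.uIoc a b ∩ K, u t * f t with hc
  have hind : ∀ (S : Set ℝ) (h : ℝ → ℝ), MeasurableSet S →
      ∫ t in S ∩ K, h t = ∫ t, S.indicator h t ∂(volume.restrict K) := by
    intro S h hS
    rw [integral_indicator hS, ← Measure.restrict_restrict hS]
  have key : ∀ x : ℝ, (∫ t in Set.uIoc b x ∩ K, u t * f t) =
      (∫ t in Set.uIoc a x ∩ K, u t * F t) + c := by
    intro x
    rw [hind _ _ measurableSet_uIoc, hind _ _ measurableSet_uIoc, hc,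
      hind _ _ measurableSet_uIoc]
    have heq : (fun t => (Set.uIoc b x).indicator (fun s => u s * f s) t) =
        fun t => (Set.uIoc a x).indicator (fun s => u s * F s) t
          + (Set.uIoc a b).indicator (fun s => u s * f s) t := by
      funext t
      rw [indicator_key a b x (fun s => u s * f s) t]
      congr 1
      exact congrFun (Set.indicator_congr fun s _ => (huF s).symm) t
    rw [heq]
    exact integral_add
      (by
        have h3 : Integrable
            (fun s => u s * f s - 2 * (Set.uIoc a b).indicator (fun t => u t * f t) s)
            (volume.restrict K) :=
          hg.sub (by simpa [Pi.smul_def, smul_eq_mul] using ((hg.indicator hBmeas).smul (2:ℝ)))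
        have h4 := h3.indicator (measurableSet_uIoc (a := a) (b := x))
        refine h4.congr (Filter.Eventually.of_forall fun t => ?_)
        exact congrFun (Set.indicator_congr fun s _ => (huF s).symm) t)
      (hg.indicator hBmeas)
  calc (⨅ α : ℝ, eLpNorm (fun x => v x * ((∫ t in Set.uIoc b x ∩ K, u t * f t) - α)) p
        (volume.restrict K))
      = ⨅ α : ℝ, eLpNorm (fun x => v x * ((∫ t in Set.uIoc a x ∩ K, u t * F t) - (α - c))) p
        (volume.restrict K) := by
        refine iInf_congr fun α => ?_
        congr 1
        funext x
        rw [key x]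
        ring
    _ = ⨅ α : ℝ, eLpNorm (fun x => v x * ((∫ t in Set.uIoc a x ∩ K, u t * F t) - α)) p
        (volume.restrict K) :=
        Equiv.iInf_comp (g := fun β => eLpNorm
          (fun x => v x * ((∫ t in Set.uIoc a x ∩ K, u t * F t) - β)) p
          (volume.restrict K)) (Equiv.subRight c)
    _ ≤ _ := le_iSup₂ (f := fun (f : ℝ → ℝ) (_ : MemLp f p (volume.restrict K) ∧
          eLpNorm f p (volume.restrict K) ≤ 1) =>
          ⨅ α : ℝ, eLpNorm (fun x => v x * ((∫ t in Set.uIoc a x ∩ K, u t * f t) - α)) p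
            (volume.restrict K))
        F ⟨hFmem, hFnorm.le.trans hf.2⟩

/-- (Lemma 3.2, interval case.) For `1 < p ≤ ∞`, the quotient norm
`A(K) = ‖S T_{a,K}‖` is independent of the base point `a`. -/
theorem stmt_13 (p q : ℝ≥0∞) (hp : 1 < p) (hpq : 1 / p + 1 / q = 1)
    (K : Set ℝ) (hK : MeasurableSet K) (u v : ℝ → ℝ)
    (hu : MemLp u q (volume.restrict K)) (hv : MemLp v p (volume.restrict K))
    (a b : ℝ) :
    hardyABase p a K u v = hardyABase p b K u v :=
  le_antisymm (hardy_mono p q hpq K u v hu b a) (hardy_mono p q hpq K u v hu a b)
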